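/- If for a constant C > 0 the equation (n - 2k - 3)·(4p(1-p))^k/√(πk) = C holds, then k = log_s(n) - (1/2)·log_s(log_s n) + O(1), where s = 1/(4p(1-p)). -/

import Mathlib

open Real Filter

set_option maxHeartbeats 1000000 in
/-- solving R(k) = C gives k = log_s n - (1/2)log_s log_s n + O(1). -/
theorem stmt_18 (p : ℝ) (hp : 1/2 < p) (hp1 : p < 1) (C₀ : ℝ) (hC₀ : 0 < C₀) :
    ∃ C : ℝ, ∃ N : ℕ, ∀ n : ℕ, N ≤ n → ∀ k : ℕ, 1 ≤ k →
      ((n : ℝ) - 2*k - 3) * (4*p*(1-p)) ^ k / Real.sqrt (Real.pi * k) = C₀ →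
      |(k : ℝ) - (Real.logb (1/(4*p*(1-p))) n
        - Real.logb (1/(4*p*(1-p))) (Real.logb (1/(4*p*(1-p))) n) / 2)| ≤ C := by
  have hq0 : 0 < 4*p*(1-p) := by nlinarith
  have hq1 : 4*p*(1-p) < 1 := by nlinarith
  set q := 4*p*(1-p) with hqdef
  set s := 1/q with hsdef
  have hs1 : 1 < s := by rw [hsdef, lt_div_iff₀ hq0]; linarith
  set b := Real.log s with hbdef
  have hb : 0 < b := Real.log_pos hs1
  have hsπ : 0 < Real.sqrt π := Real.sqrt_pos.mpr Real.pi_pos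
  set c₁ : ℝ := -(Real.log (C₀ * Real.sqrt π)) / b with hc₁def
  set c₄ : ℝ := Real.log (2 * C₀ * Real.sqrt π) / b with hc₄def
  set D₂ : ℝ := Real.log (π * (1 + |c₁|)) + |Real.log (π/4)| with hD₂def
  refine ⟨(Real.log 2 + D₂/2 + |Real.log C₀|)/b, ?_⟩
  -- eventual largeness conditions
  have hln : Tendsto (fun n : ℕ => Real.log n) atTop atTop :=
    Real.tendsto_log_atTop.comp tendsto_natCast_atTop_atTop
  have hev2 : ∀ᶠ n : ℕ in atTop, b * (4*|c₄| + 1) ≤ Real.log n :=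
    hln.eventually_ge_atTop _
  have hev3R : ∀ᶠ x : ℝ in atTop, 2*(Real.log x / b + c₁) + 3 ≤ x/2 := by
    have h := Real.isLittleO_log_id_atTop.def (show (0:ℝ) < b/8 by positivity)
    filter_upwards [h, eventually_ge_atTop (1:ℝ),
      eventually_ge_atTop (8*(|c₁| + 3))] with x hx hx1 hx2
    simp only [Real.norm_eq_abs, id] at hx
    have hlx : 0 ≤ Real.log x := Real.log_nonneg hx1
    rw [abs_of_nonneg hlx, abs_of_nonneg (by linarith only [hx1] : (0:ℝ) ≤ x)] at hx
    have e1 : Real.log x / b ≤ x/8 := by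
      rw [div_le_div_iff₀ hb (by norm_num : (0:ℝ) < 8)]
      linarith only [hx]
    have e2 : c₁ ≤ |c₁| := le_abs_self _
    linarith only [e1, e2, hx2]
  have hev3 : ∀ᶠ n : ℕ in atTop, 2*(Real.log n / b + c₁) + 3 ≤ (n:ℝ)/2 :=
    tendsto_natCast_atTop_atTop.eventually hev3R
  obtain ⟨N, hN⟩ := eventually_atTop.mp (hev2.and hev3)
  refine ⟨N, ?_⟩
  intro n hn k hk heq
  obtain ⟨h2, h3⟩ := hN n hn
  -- rewrite the goal in terms of natural logs
  simp only [Real.logb, ← hbdef]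
  -- basic positivity facts
  have habsc₄ : (0:ℝ) ≤ |c₄| := abs_nonneg _
  have hlogpos : 0 < Real.log n := lt_of_lt_of_le (by positivity) h2
  have hn0' : (0:ℝ) < n := by
    rcases Nat.eq_zero_or_pos n with h | h
    · subst h; simp at hlogpos
    · exact_mod_cast h
  set L := Real.log (n:ℝ) / b with hLdef
  have hLpos : 0 < L := div_pos hlogpos hb
  have hL1 : 4*|c₄| + 1 ≤ L := by
    rw [hLdef, le_div_iff₀ hb]; linarith only [h2]
  have hL1' : 1 ≤ L := by linarith only [hL1, habsc₄]
  have hk1 : (1:ℝ) ≤ (k:ℝ) := by exact_mod_cast hk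
  have hπk0 : 0 < π * (k:ℝ) := mul_pos Real.pi_pos (by linarith only [hk1])
  have hsπk : 0 < Real.sqrt (π * (k:ℝ)) := Real.sqrt_pos.mpr hπk0
  have hqk : 0 < q^k := pow_pos hq0 k
  have hsk0 : 0 < s^k := pow_pos (by linarith only [hs1]) k
  rw [div_eq_iff (ne_of_gt hsπk)] at heq
  have hskqk : s^k = (q^k)⁻¹ := by rw [hsdef, one_div, inv_pow]
  have hA : (n:ℝ) - 2*k - 3 = C₀ * Real.sqrt (π*(k:ℝ)) * s^k := by
    rw [hskqk, eq_comm, mul_inv_eq_iff_eq_mul₀ (ne_of_gt hqk)]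
    linarith only [heq]
  have hA0 : 0 < (n:ℝ) - 2*k - 3 := by
    rw [hA]; exact mul_pos (mul_pos hC₀ hsπk) hsk0
  have hAx : (n:ℝ) - 2*k - 3 ≤ n := by linarith only [hk1]
  have hkx : (k:ℝ) ≤ n := by linarith only [hA0, hk1]
  -- Step 1: upper bound on k
  have hmono1 : Real.sqrt π ≤ Real.sqrt (π*(k:ℝ)) :=
    Real.sqrt_le_sqrt (le_mul_of_one_le_right Real.pi_pos.le hk1)
  have h5 : C₀ * Real.sqrt π * s^k ≤ (n:ℝ) := by
    have h51 : C₀ * Real.sqrt π * s^k ≤ C₀ * Real.sqrt (π*(k:ℝ)) * s^k :=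
      mul_le_mul_of_nonneg_right (mul_le_mul_of_nonneg_left hmono1 hC₀.le) hsk0.le
    rw [← hA] at h51
    linarith only [h51, hk1]
  have hlog5 : Real.log (C₀ * Real.sqrt π) + (k:ℝ) * b ≤ Real.log n := by
    have l1 : Real.log (C₀ * Real.sqrt π * s^k) ≤ Real.log n :=
      Real.log_le_log (by positivity) h5
    rw [Real.log_mul (by positivity) (ne_of_gt hsk0), Real.log_pow, ← hbdef] at l1
    linarith only [l1]
  have hkub' : (k:ℝ) ≤ L + c₁ := by
    rw [hLdef, hc₁def, ← add_div, le_div_iff₀ hb]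
    linarith only [hlog5]
  -- Step 2: A ≥ n/2
  have hA2 : (n:ℝ)/2 ≤ (n:ℝ) - 2*k - 3 := by
    rw [hLdef] at hkub'
    linarith only [h3, hkub']
  -- Step 3: lower bound on k
  have hsn : 0 < Real.sqrt (n:ℝ) := Real.sqrt_pos.mpr hn0'
  have hmono2 : Real.sqrt (π*(k:ℝ)) ≤ Real.sqrt π * Real.sqrt (n:ℝ) := by
    rw [← Real.sqrt_mul Real.pi_pos.le]
    exact Real.sqrt_le_sqrt (mul_le_mul_of_nonneg_left hkx Real.pi_pos.le)
  have h6 : (n:ℝ)/2 ≤ C₀ * (Real.sqrt π * Real.sqrt (n:ℝ)) * s^k := by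
    have h61 : C₀ * Real.sqrt (π*(k:ℝ)) * s^k ≤ C₀ * (Real.sqrt π * Real.sqrt (n:ℝ)) * s^k :=
      mul_le_mul_of_nonneg_right (mul_le_mul_of_nonneg_left hmono2 hC₀.le) hsk0.le
    rw [← hA] at h61
    linarith only [h61, hA2]
  have l2 : Real.log ((n:ℝ)/2) ≤ Real.log (C₀ * (Real.sqrt π * Real.sqrt (n:ℝ)) * s^k) :=
    Real.log_le_log (by positivity) h6
  rw [Real.log_div (ne_of_gt hn0') two_ne_zero,
      Real.log_mul (by positivity) (ne_of_gt hsk0),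
      Real.log_mul (ne_of_gt hC₀) (by positivity),
      Real.log_mul (ne_of_gt hsπ) (ne_of_gt hsn),
      Real.log_pow, Real.log_sqrt hn0'.le, ← hbdef] at l2
  have hlog2C : Real.log (2*C₀*Real.sqrt π)
      = Real.log 2 + Real.log C₀ + Real.log (Real.sqrt π) := by
    rw [Real.log_mul (by positivity) (ne_of_gt hsπ), Real.log_mul two_ne_zero (ne_of_gt hC₀)]
  have hklb' : L/2 - c₄ ≤ (k:ℝ) := by
    have heq2 : L/2 - c₄ = (Real.log (n:ℝ)/2 - Real.log (2*C₀*Real.sqrt π))/b := by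
      rw [hLdef, hc₄def]; ring
    rw [heq2, div_le_iff₀ hb, hlog2C]
    linarith only [l2]
  have hk4 : L/4 ≤ (k:ℝ) := by
    linarith only [hklb', hL1, le_abs_self c₄]
  have hkU : (k:ℝ) ≤ L * (1 + |c₁|) := by
    have h1' : |c₁| ≤ L * |c₁| := le_mul_of_one_le_left (abs_nonneg c₁) hL1'
    linarith only [h1', le_abs_self c₁, hkub']
  -- Step 4: logarithm of the main equation
  have hk_eq : (k:ℝ) * b
      = Real.log ((n:ℝ) - 2*k - 3) - Real.log C₀ - Real.log (π*(k:ℝ))/2 := by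
    have l3 := congrArg Real.log hA
    rw [Real.log_mul (by positivity) (ne_of_gt hsk0),
        Real.log_mul (ne_of_gt hC₀) (ne_of_gt hsπk),
        Real.log_pow, Real.log_sqrt hπk0.le, ← hbdef] at l3
    linarith only [l3]
  -- bounds B1
  have hB1a : Real.log ((n:ℝ) - 2*k - 3) ≤ Real.log n := Real.log_le_log hA0 hAx
  have hB1b : Real.log (n:ℝ) - Real.log 2 ≤ Real.log ((n:ℝ) - 2*k - 3) := by
    have h' := Real.log_le_log (by positivity) hA2
    rwa [Real.log_div (ne_of_gt hn0') two_ne_zero] at h'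
  -- bounds B2
  have hLne : L ≠ 0 := ne_of_gt hLpos
  have hB2a : Real.log (π*(k:ℝ)) ≤ Real.log (π*(1+|c₁|)) + Real.log L := by
    have h' : π*(k:ℝ) ≤ (π*(1+|c₁|)) * L := by
      have h'' := mul_le_mul_of_nonneg_left hkU Real.pi_pos.le
      linarith only [h'']
    calc Real.log (π*(k:ℝ)) ≤ Real.log ((π*(1+|c₁|))*L) := Real.log_le_log hπk0 h'
      _ = _ := Real.log_mul (by positivity) hLne
  have hB2b : Real.log (π/4) + Real.log L ≤ Real.log (π*(k:ℝ)) := by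
    have h' : (π/4) * L ≤ π*(k:ℝ) := by
      have h'' := mul_le_mul_of_nonneg_left hk4 Real.pi_pos.le
      linarith only [h'']
    calc Real.log (π/4) + Real.log L = Real.log ((π/4)*L) :=
          (Real.log_mul (by positivity) hLne).symm
      _ ≤ _ := Real.log_le_log (by positivity) h'
  have hπlog : 0 ≤ Real.log (π*(1+|c₁|)) := by
    refine Real.log_nonneg (le_trans (by linarith only [Real.pi_gt_three]) ?_)
    exact le_mul_of_one_le_right Real.pi_pos.le (by linarith only [abs_nonneg c₁])
  -- assemble
  have e3 : (Real.log L / b / 2) * b = Real.log L / 2 := by field_simp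
  have e4 : L * b = Real.log (n:ℝ) := by
    rw [hLdef, div_mul_cancel₀ _ (ne_of_gt hb)]
  have hkT : ((k:ℝ) - (L - Real.log L / b / 2)) * b
      = (Real.log ((n:ℝ) - 2*k - 3) - Real.log n)
        - (Real.log (π*(k:ℝ)) - Real.log L)/2 - Real.log C₀ := by
    linear_combination hk_eq - e4 + e3
  have hEbound : |(Real.log ((n:ℝ) - 2*k - 3) - Real.log n)
        - (Real.log (π*(k:ℝ)) - Real.log L)/2 - Real.log C₀|
      ≤ Real.log 2 + D₂/2 + |Real.log C₀| := by
    rw [abs_le]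
    have hc1 := neg_abs_le (Real.log C₀)
    have hc2 := le_abs_self (Real.log C₀)
    have hc3 := abs_nonneg (Real.log (π/4))
    have hc4 := neg_abs_le (Real.log (π/4))
    have hlog2 : (0:ℝ) ≤ Real.log 2 := Real.log_nonneg (by norm_num)
    constructor <;> rw [hD₂def] <;>
      linarith only [hB1a, hB1b, hB2a, hB2b, hc1, hc2, hc3, hc4, hlog2, hπlog]
  rw [le_div_iff₀ hb]
  calc |(k:ℝ) - (L - Real.log L / b / 2)| * b
      = |((k:ℝ) - (L - Real.log L / b / 2)) * b| := by rw [abs_mul, abs_of_pos hb]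
    _ = _ := by rw [hkT]
    _ ≤ _ := hEbound
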